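/- Suppose the sender's payoff is state-independent: u_S(ω,a) = v(a) for some v : A → ℝ and all ω. Then for every prior π ∈ Δ(Ω), the supremum over λ ∈ Δ(M) of sup{e_S : (e_S, e_R) ∈ E(π,λ)} is attained and equals the maximum over λ ∈ Δ(M) and (p_m) ∈ Σ(π,λ) of Σ_m λ(m)·max_{a ∈ A*(p_m)} v(a), i.e., the sender's maximal partial-commitment payoff equals the Bayesian persuasion payoff with sender-preferred tie-breaking. -/

import Mathlib

open Finset

noncomputable section

/-- The receiver's best-response set `A*(p) = argmax_a ∑ ω, p ω * uR ω a`. -/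
def Astar {Ω A : Type*} [Fintype Ω] (uR : Ω → A → ℝ) (p : Ω → ℝ) : Set A :=
  {a | ∀ b, ∑ ω, p ω * uR ω b ≤ ∑ ω, p ω * uR ω a}

/-- `(p m) ∈ Σ(π, lam)`: every `p m` is a belief and `∑ m, lam m • p m = π`. -/
def BayesPlausible {Ω M : Type*} [Fintype Ω] [Fintype M]
    (π : Ω → ℝ) (lam : M → ℝ) (p : M → Ω → ℝ) : Prop :=
  (∀ m, p m ∈ stdSimplex ℝ Ω) ∧ ∀ ω, ∑ m, lam m * p m ω = π ω

/-- (Eq-R): for every `m` with `lam m > 0`, the response rule `κ(·∣m)` is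
supported on the receiver's best responses to the posterior `p m`. -/
def EqR {Ω M A : Type*} [Fintype Ω]
    (uR : Ω → A → ℝ) (lam : M → ℝ) (p : M → Ω → ℝ) (κ : M → A → ℝ) : Prop :=
  ∀ m, 0 < lam m → ∀ a, 0 < κ m a → a ∈ Astar uR (p m)

/-- (Eq-S): the sender cannot profitably deviate within `Σ(π, lam)`. -/
def EqS {Ω M A : Type*} [Fintype Ω] [Fintype M] [Fintype A]
    (uS : Ω → A → ℝ) (π : Ω → ℝ) (lam : M → ℝ)
    (p : M → Ω → ℝ) (κ : M → A → ℝ) : Prop :=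
  ∀ pt : M → Ω → ℝ, BayesPlausible π lam pt →
    0 ≤ ∑ m, lam m * ∑ ω, (p m ω - pt m ω) * ∑ a, κ m a * uS ω a

/-- Expected payoff `∑ m, lam m * ∑ ω, p m ω * ∑ a, κ a m * u ω a`. -/
def payoffOf {Ω M A : Type*} [Fintype Ω] [Fintype M] [Fintype A]
    (u : Ω → A → ℝ) (lam : M → ℝ) (p : M → Ω → ℝ) (κ : M → A → ℝ) : ℝ :=
  ∑ m, lam m * ∑ ω, p m ω * ∑ a, κ m a * u ω a

/-- `E(π, lam)`: the set of equilibrium payoff vectors of the persuasion model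
with partial commitment. -/
def Epayoffs {Ω A : Type*} (M : Type*) [Fintype Ω] [Fintype M] [Fintype A]
    (uS uR : Ω → A → ℝ) (π : Ω → ℝ) (lam : M → ℝ) : Set (ℝ × ℝ) :=
  {e | ∃ (p : M → Ω → ℝ) (κ : M → A → ℝ),
    BayesPlausible π lam p ∧ (∀ m, κ m ∈ stdSimplex ℝ A) ∧
    EqR uR lam p κ ∧ EqS uS π lam p κ ∧
    e = (payoffOf uS lam p κ, payoffOf uR lam p κ)}

/-- The sender-preferred value over the receiver's best responses at belief `p`:
`max_{a ∈ A*(p)} v a` (expressed as a supremum in `ℝ`). -/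
def tieBreakVal {Ω A : Type*} [Fintype Ω] (uR : Ω → A → ℝ) (v : A → ℝ)
    (p : Ω → ℝ) : ℝ :=
  sSup (v '' Astar uR p)

/-! ### Auxiliary lemmas -/

/-- There is a best response maximizing `v`, and it realizes `tieBreakVal`. -/
lemma exists_tiebreak {Ω A : Type*} [Fintype Ω] [Fintype A] [Nonempty A]
    (uR : Ω → A → ℝ) (v : A → ℝ) (p : Ω → ℝ) :
    ∃ a ∈ Astar uR p, (∀ b ∈ Astar uR p, v b ≤ v a) ∧ tieBreakVal uR v p = v a := by
  classical
  obtain ⟨a0, -, ha0⟩ := Finset.exists_max_image (Finset.univ : Finset A)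
    (fun a => ∑ ω, p ω * uR ω a) ⟨Classical.arbitrary A, mem_univ _⟩
  have ha0' : a0 ∈ Astar uR p := fun b => ha0 b (mem_univ b)
  obtain ⟨a1, ha1m, ha1⟩ := Finset.exists_max_image
    (Finset.univ.filter (· ∈ Astar uR p)) v ⟨a0, by simp [ha0']⟩
  have ha1' : a1 ∈ Astar uR p := by simpa using ha1m
  refine ⟨a1, ha1', fun b hb => ha1 b (by simp [hb]), ?_⟩
  exact IsGreatest.csSup_eq ⟨⟨a1, ha1', rfl⟩, by rintro y ⟨b, hb, rfl⟩; exact ha1 b (by simp [hb])⟩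

/-- A convex combination is bounded by a bound on its support. -/
lemma convex_bound {A : Type*} [Fintype A] (κ : A → ℝ) (v : A → ℝ) (c : ℝ)
    (hκ : κ ∈ stdSimplex ℝ A) (h : ∀ a, 0 < κ a → v a ≤ c) :
    ∑ a, κ a * v a ≤ c := by
  calc ∑ a, κ a * v a ≤ ∑ a, κ a * c := by
        refine Finset.sum_le_sum fun a _ => ?_
        rcases lt_or_eq_of_le (hκ.1 a) with hlt | heq
        · exact mul_le_mul_of_nonneg_left (h a hlt) (le_of_lt hlt)
        · simp [← heq]
    _ = c := by rw [← Finset.sum_mul, hκ.2, one_mul]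

/-- With a state-independent sender payoff, the sender's expected payoff only
depends on the marginal and the response rule. -/
lemma payoff_eq {Ω M A : Type*} [Fintype Ω] [Fintype M] [Fintype A]
    (uS : Ω → A → ℝ) (v : A → ℝ) (hv : ∀ ω a, uS ω a = v a)
    (lam : M → ℝ) (p : M → Ω → ℝ) (κ : M → A → ℝ) (hp : ∀ m, p m ∈ stdSimplex ℝ Ω) :
    payoffOf uS lam p κ = ∑ m, lam m * ∑ a, κ m a * v a := by
  unfold payoffOf
  refine Finset.sum_congr rfl fun m _ => ?_
  congr 1
  simp only [hv]
  rw [← Finset.sum_mul, (hp m).2, one_mul]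

/-- The sender's payoff of any (Eq-R) profile is at most the tie-break value. -/
lemma payoff_le_tiebreak {Ω M A : Type*} [Fintype Ω] [Fintype M] [Fintype A] [Nonempty A]
    (uS uR : Ω → A → ℝ) (v : A → ℝ) (hv : ∀ ω a, uS ω a = v a)
    (lam : M → ℝ) (hlam : lam ∈ stdSimplex ℝ M)
    (p : M → Ω → ℝ) (κ : M → A → ℝ)
    (hp : ∀ m, p m ∈ stdSimplex ℝ Ω) (hκ : ∀ m, κ m ∈ stdSimplex ℝ A)
    (heqr : EqR uR lam p κ) :
    payoffOf uS lam p κ ≤ ∑ m, lam m * tieBreakVal uR v (p m) := by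
  rw [payoff_eq uS v hv lam p κ hp]
  refine Finset.sum_le_sum fun m _ => ?_
  rcases lt_or_eq_of_le (hlam.1 m) with hlt | heq
  · refine mul_le_mul_of_nonneg_left ?_ (le_of_lt hlt)
    obtain ⟨a1, ha1, hmax, htb⟩ := exists_tiebreak uR v (p m)
    rw [htb]
    exact convex_bound _ _ _ (hκ m) fun a ha => hmax a (heqr m hlt a ha)
  · simp [← heq]

/-- (Eq-S) holds automatically for state-independent sender payoffs. -/
lemma eqs_auto {Ω M A : Type*} [Fintype Ω] [Fintype M] [Fintype A]
    (uS : Ω → A → ℝ) (v : A → ℝ) (hv : ∀ ω a, uS ω a = v a)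
    (π : Ω → ℝ) (lam : M → ℝ) (p : M → Ω → ℝ) (κ : M → A → ℝ)
    (hp : ∀ m, p m ∈ stdSimplex ℝ Ω) :
    EqS uS π lam p κ := by
  intro pt hpt
  have : ∀ m, ∑ ω, (p m ω - pt m ω) * ∑ a, κ m a * uS ω a = 0 := by
    intro m
    have hcol : ∀ ω, ∑ a, κ m a * uS ω a = ∑ a, κ m a * v a := by
      intro ω; simp [hv]
    simp only [hcol, ← Finset.sum_mul, Finset.sum_sub_distrib, (hp m).2, (hpt.1 m).2]
    ring
  simp [this]

section compactpart
variable {Ω M A : Type*} [Fintype Ω] [Fintype M] [Fintype A]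

/-- The compact feasible set: marginals, Bayes-plausible posteriors, response
rules, with a (closed) complementarity condition expressing that responses are
supported on best replies. -/
def Sset (uR : Ω → A → ℝ) (π : Ω → ℝ) :
    Set ((M → ℝ) × (M → Ω → ℝ) × (M → A → ℝ)) :=
  (Prod.fst ⁻¹' stdSimplex ℝ M) ∩
  (⋂ m, (fun x : (M → ℝ) × (M → Ω → ℝ) × (M → A → ℝ) => x.2.1 m) ⁻¹' stdSimplex ℝ Ω) ∩
  (⋂ ω, {x : (M → ℝ) × (M → Ω → ℝ) × (M → A → ℝ) | ∑ m, x.1 m * x.2.1 m ω = π ω}) ∩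
  (⋂ m, (fun x : (M → ℝ) × (M → Ω → ℝ) × (M → A → ℝ) => x.2.2 m) ⁻¹' stdSimplex ℝ A) ∩
  (⋂ m, ⋂ a, ⋂ b, {x : (M → ℝ) × (M → Ω → ℝ) × (M → A → ℝ) |
    x.2.2 m a * ((∑ ω, x.2.1 m ω * uR ω b) - ∑ ω, x.2.1 m ω * uR ω a) ≤ 0})

lemma mem_Sset_iff (uR : Ω → A → ℝ) (π : Ω → ℝ)
    (x : (M → ℝ) × (M → Ω → ℝ) × (M → A → ℝ)) :
    x ∈ Sset uR π ↔ x.1 ∈ stdSimplex ℝ M ∧ BayesPlausible π x.1 x.2.1 ∧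
      (∀ m, x.2.2 m ∈ stdSimplex ℝ A) ∧
      (∀ m a b, x.2.2 m a * ((∑ ω, x.2.1 m ω * uR ω b) - ∑ ω, x.2.1 m ω * uR ω a) ≤ 0) := by
  simp only [Sset, Set.mem_inter_iff, Set.mem_preimage, Set.mem_iInter, Set.mem_setOf_eq,
    BayesPlausible]
  tauto

lemma isCompact_Sset (uR : Ω → A → ℝ) (π : Ω → ℝ) : IsCompact (Sset (M := M) uR π) := by
  have hclosed : IsClosed (Sset (M := M) uR π) := by
    unfold Sset
    refine (((((isClosed_stdSimplex ℝ M).preimage continuous_fst).inter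
      (isClosed_iInter fun m => (isClosed_stdSimplex ℝ Ω).preimage (by fun_prop))).inter
      (isClosed_iInter fun ω => isClosed_eq (by fun_prop) continuous_const)).inter
      (isClosed_iInter fun m => (isClosed_stdSimplex ℝ A).preimage (by fun_prop))).inter
      (isClosed_iInter fun m => isClosed_iInter fun a => isClosed_iInter fun b =>
        isClosed_le (by fun_prop) continuous_const)
  have hsub : Sset (M := M) uR π ⊆
      (stdSimplex ℝ M) ×ˢ ((Set.univ.pi fun _ : M => stdSimplex ℝ Ω) ×ˢ
        (Set.univ.pi fun _ : M => stdSimplex ℝ A)) := by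
    intro x hx
    rw [mem_Sset_iff] at hx
    exact ⟨hx.1, fun m _ => hx.2.1.1 m, fun m _ => hx.2.2.1 m⟩
  exact IsCompact.of_isClosed_subset
    ((isCompact_stdSimplex ℝ M).prod ((isCompact_univ_pi fun _ => isCompact_stdSimplex ℝ Ω).prod
      (isCompact_univ_pi fun _ => isCompact_stdSimplex ℝ A))) hclosed hsub

lemma exists_max_Sset (uR : Ω → A → ℝ) (v : A → ℝ) (π : Ω → ℝ)
    (hne : (Sset (M := M) uR π).Nonempty) :
    ∃ x ∈ Sset (M := M) uR π, ∀ y ∈ Sset (M := M) uR π,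
      (∑ m, y.1 m * ∑ a, y.2.2 m a * v a) ≤ ∑ m, x.1 m * ∑ a, x.2.2 m a * v a := by
  obtain ⟨x, hx, hmax⟩ := (isCompact_Sset uR π).exists_isMaxOn hne
    (Continuous.continuousOn (by fun_prop :
      Continuous fun x : (M → ℝ) × (M → Ω → ℝ) × (M → A → ℝ) =>
        ∑ m, x.1 m * ∑ a, x.2.2 m a * v a))
  exact ⟨x, hx, fun y hy => hmax hy⟩

/-- Given a Bayes-plausible collection, the sender-preferred point-mass response
rule yields a point of `Sset` whose value is the tie-broken persuasion payoff. -/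
lemma tiebreak_mem_Sset [Nonempty A] (uR : Ω → A → ℝ) (v : A → ℝ) (π : Ω → ℝ)
    (lam : M → ℝ) (hlam : lam ∈ stdSimplex ℝ M)
    (p : M → Ω → ℝ) (hp : BayesPlausible π lam p) :
    ∃ κ : M → A → ℝ, (lam, p, κ) ∈ Sset uR π ∧
      (∑ m, lam m * ∑ a, κ m a * v a) = ∑ m, lam m * tieBreakVal uR v (p m) := by
  classical
  choose tb htb hmaxv htbv using fun m => exists_tiebreak uR v (p m)
  refine ⟨fun m a => if a = tb m then 1 else 0, ?_, ?_⟩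
  · rw [mem_Sset_iff]
    refine ⟨hlam, hp, fun m => ⟨fun a => by positivity, by simp⟩, fun m a b => ?_⟩
    by_cases ha : a = tb m
    · subst ha
      simpa using sub_nonpos.2 (htb m b)
    · simp [ha]
  · refine Finset.sum_congr rfl fun m _ => ?_
    rw [htbv m]
    simp [ite_mul]

end compactpart

/-- If the sender's payoff is state-independent (`uS ω a = v a`),
then for every prior `π ∈ Δ(Ω)` the supremum over marginals `lam ∈ Δ(M)` of the
sender's equilibrium payoffs in `E(π, lam)` is attained, and equals the maximum
over `lam ∈ Δ(M)` and `(p m) ∈ Σ(π, lam)` of `∑ m, lam m * max_{a ∈ A*(p m)} v a`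
— the Bayesian persuasion payoff with sender-preferred tie-breaking. -/
theorem stmt9 {Ω M A : Type*} [Fintype Ω] [Nonempty Ω] [Fintype M] [Nonempty M]
    [Fintype A] [Nonempty A]
    (uS uR : Ω → A → ℝ) (v : A → ℝ) (hv : ∀ ω a, uS ω a = v a)
    (π : Ω → ℝ) (hπ : π ∈ stdSimplex ℝ Ω) :
    ∃ lam ∈ stdSimplex ℝ M, ∃ e ∈ Epayoffs M uS uR π lam,
      (∀ lam' ∈ stdSimplex ℝ M, ∀ e' ∈ Epayoffs M uS uR π lam', e'.1 ≤ e.1) ∧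
      (∃ p : M → Ω → ℝ, BayesPlausible π lam p ∧
        e.1 = ∑ m, lam m * tieBreakVal uR v (p m)) ∧
      (∀ lam' ∈ stdSimplex ℝ M, ∀ p' : M → Ω → ℝ, BayesPlausible π lam' p' →
        ∑ m, lam' m * tieBreakVal uR v (p' m) ≤ e.1) := by
  classical
  -- the feasible set is nonempty
  have hne : (Sset (M := M) uR π).Nonempty := by
    obtain ⟨m0⟩ := ‹Nonempty M›
    have hlam0 : (fun m => if m = m0 then (1 : ℝ) else 0) ∈ stdSimplex ℝ M :=
      ⟨fun m => by positivity, by simp⟩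
    have hp0 : BayesPlausible π (fun m => if m = m0 then (1 : ℝ) else 0) (fun _ => π) := by
      refine ⟨fun _ => hπ, fun ω => ?_⟩
      rw [← Finset.sum_mul, hlam0.2, one_mul]
    obtain ⟨κ0, hκ0, -⟩ := tiebreak_mem_Sset uR v π _ hlam0 _ hp0
    exact ⟨_, hκ0⟩
  -- the maximizer
  obtain ⟨x, hx, hmax⟩ := exists_max_Sset uR v π hne
  rw [mem_Sset_iff] at hx
  obtain ⟨hlam, hbp, hκ, hcomp⟩ := hx
  set lam := x.1 with hlamdef
  set p := x.2.1 with hpdef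
  set κ := x.2.2 with hκdef
  -- key upper bound: any Bayes-plausible tie-broken payoff is at most the max value
  have keyF : ∀ lam' ∈ stdSimplex ℝ M, ∀ p' : M → Ω → ℝ, BayesPlausible π lam' p' →
      ∑ m, lam' m * tieBreakVal uR v (p' m) ≤ ∑ m, lam m * ∑ a, κ m a * v a := by
    intro lam' hlam' p' hp'
    obtain ⟨κ', hκ'mem, hκ'val⟩ := tiebreak_mem_Sset uR v π lam' hlam' p' hp'
    calc ∑ m, lam' m * tieBreakVal uR v (p' m) = ∑ m, lam' m * ∑ a, κ' m a * v a :=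
          hκ'val.symm
      _ ≤ ∑ m, lam m * ∑ a, κ m a * v a := hmax _ hκ'mem
  -- the maximizer satisfies (Eq-R)
  have heqr : EqR uR lam p κ := by
    intro m _ a ha b
    have h := hcomp m a b
    nlinarith
  -- the sender's payoff at the maximizer
  have hpay : payoffOf uS lam p κ = ∑ m, lam m * ∑ a, κ m a * v a :=
    payoff_eq uS v hv lam p κ hbp.1
  refine ⟨lam, hlam, (payoffOf uS lam p κ, payoffOf uR lam p κ),
    ⟨p, κ, hbp, hκ, heqr, eqs_auto uS v hv π lam p κ hbp.1, rfl⟩, ?_, ?_, ?_⟩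
  · -- global optimality over all equilibria
    rintro lam' hlam' e' ⟨p', κ', hbp', hκ', heqr', -, rfl⟩
    calc payoffOf uS lam' p' κ' ≤ ∑ m, lam' m * tieBreakVal uR v (p' m) :=
          payoff_le_tiebreak uS uR v hv lam' hlam' p' κ' hbp'.1 hκ' heqr'
      _ ≤ ∑ m, lam m * ∑ a, κ m a * v a := keyF lam' hlam' p' hbp'
      _ = payoffOf uS lam p κ := hpay.symm
  · -- the payoff equals the tie-broken persuasion payoff at (lam, p)
    refine ⟨p, hbp, le_antisymm ?_ ?_⟩
    · exact payoff_le_tiebreak uS uR v hv lam hlam p κ hbp.1 hκ heqr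
    · calc ∑ m, lam m * tieBreakVal uR v (p m) ≤ ∑ m, lam m * ∑ a, κ m a * v a :=
            keyF lam hlam p hbp
        _ = payoffOf uS lam p κ := hpay.symm
  · -- it dominates every Bayes-plausible tie-broken payoff
    intro lam' hlam' p' hp'
    calc ∑ m, lam' m * tieBreakVal uR v (p' m) ≤ ∑ m, lam m * ∑ a, κ m a * v a :=
          keyF lam' hlam' p' hp'
      _ = payoffOf uS lam p κ := hpay.symm
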